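/- Let α be a QCA of range R and A an l-visibly simple algebra. Then α(A) is (l + 2R)-visibly simple. -/
import Mathlib


open Matrix

/-- A configuration of the local (computational-basis) indices of all sites. -/
abbrev Cfg {V : Type} (d : V → ℕ) := ∀ i, Fin (d i)

/-- The algebra of operators on the tensor-product Hilbert space `⊗ᵢ ℂ^{d i}`. -/
abbrev Op {V : Type} [Fintype V] [DecidableEq V] (d : V → ℕ) :=
  Matrix (Cfg d) (Cfg d) ℂ

open Classical in
/-- `M` is supported on the set of sites `S` if `M = N ⊗ Id` for some operator `N`
acting only on the tensor factors in `S`. -/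
def SupportedOn {V : Type} [Fintype V] [DecidableEq V] (d : V → ℕ)
    (S : Set V) (M : Op d) : Prop :=
  ∃ N : Matrix (∀ i : S, Fin (d i.1)) (∀ i : S, Fin (d i.1)) ℂ,
    ∀ f g : Cfg d, M f g =
      if ∀ i ∉ S, f i = g i then N (fun i => f i.1) (fun i => g i.1) else 0

/-- The (minimal) support of an operator: the set of sites belonging to every set on
which the operator is supported.  Scalars have empty support. -/
def Supp {V : Type} [Fintype V] [DecidableEq V] (d : V → ℕ) (M : Op d) : Set V :=
  {x | ∀ S : Set V, SupportedOn d S M → x ∈ S}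

/-- An algebra `A` of operators is `l`-visibly simple if for every `O ∈ A` and every
site `x` in the support of `O` there is `P ∈ A` supported within distance `l` of `x`
which does not commute with `O`. -/
def VisiblySimple {V : Type} [Fintype V] [DecidableEq V] [PseudoMetricSpace V]
    (d : V → ℕ) (l : ℝ) (A : Subalgebra ℂ (Op d)) : Prop :=
  ∀ O ∈ A, ∀ x ∈ Supp d O,
    ∃ P ∈ A, SupportedOn d (Metric.closedBall x l) P ∧ O * P ≠ P * O

/-- A QCA of range `R`: a *-automorphism of the operator algebra such that images and
preimages of single-site operators are supported within distance `R`. -/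
def IsQCA {V : Type} [Fintype V] [DecidableEq V] [PseudoMetricSpace V]
    (d : V → ℕ) (R : ℝ) (α : Op d ≃ₐ[ℂ] Op d) : Prop :=
  (∀ M : Op d, α Mᴴ = (α M)ᴴ) ∧
  ∀ (x : V) (M : Op d), SupportedOn d {x} M →
    SupportedOn d (Metric.closedBall x R) (α M) ∧
    SupportedOn d (Metric.closedBall x R) (α.symm M)

section Aux

variable {V : Type} [Fintype V] [DecidableEq V] {d : V → ℕ}

/-- single-site matrix unit at site `x`. -/
noncomputable def unitAt (d : V → ℕ) (x : V) (a b : Fin (d x)) : Op d :=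
  Matrix.of fun f g : Cfg d =>
    if f x = a ∧ g x = b ∧ ∀ j, j ≠ x → f j = g j then (1 : ℂ) else 0

lemma unitAt_supportedOn (d : V → ℕ) (x : V) (a b : Fin (d x)) :
    SupportedOn d {x} (unitAt d x a b) := by
  classical
  refine ⟨Matrix.of fun u v => if u ⟨x, rfl⟩ = a ∧ v ⟨x, rfl⟩ = b then (1:ℂ) else 0,
    fun f g => ?_⟩
  show (if f x = a ∧ g x = b ∧ ∀ j, j ≠ x → f j = g j then (1:ℂ) else 0) = _
  by_cases h1 : ∀ i ∉ ({x} : Set V), f i = g i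
  · rw [if_pos h1]
    show _ = if f x = a ∧ g x = b then (1:ℂ) else 0
    by_cases h2 : f x = a ∧ g x = b
    · rw [if_pos ⟨h2.1, h2.2, fun j hj => h1 j (by simpa using hj)⟩, if_pos h2]
    · rw [if_neg (by tauto), if_neg h2]
  · rw [if_neg h1, if_neg]
    rintro ⟨-, -, h3⟩
    exact h1 fun i hi => h3 i (by simpa using hi)

open Classical in
lemma mul_entry {S S' : Set V} {M P : Op d}
    {N : Matrix (∀ i : S, Fin (d i.1)) (∀ i : S, Fin (d i.1)) ℂ}
    {N' : Matrix (∀ i : S', Fin (d i.1)) (∀ i : S', Fin (d i.1)) ℂ}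
    (hM : ∀ f g : Cfg d, M f g =
      if ∀ i ∉ S, f i = g i then N (fun i => f i.1) (fun i => g i.1) else 0)
    (hP : ∀ f g : Cfg d, P f g =
      if ∀ i ∉ S', f i = g i then N' (fun i => f i.1) (fun i => g i.1) else 0)
    (hdis : ∀ i, i ∈ S → i ∉ S') (f g : Cfg d) :
    (M * P) f g = if ∀ i, i ∉ S → i ∉ S' → f i = g i
      then N (fun i => f i.1) (fun i => g i.1) * N' (fun i => f i.1) (fun i => g i.1)
      else 0 := by
  rw [Matrix.mul_apply]
  by_cases hc : ∀ i, i ∉ S → i ∉ S' → f i = g i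
  · rw [if_pos hc]
    rw [Finset.sum_eq_single (fun i => if i ∈ S then g i else f i : Cfg d)]
    · rw [hM, hP, if_pos, if_pos]
      · congr 1
        · congr 1
          funext i
          exact if_pos i.2
        · congr 1
          funext i
          exact if_neg fun h => hdis i.1 h i.2
      · -- ∀ i ∉ S', h₀ i = g i
        intro i hi
        by_cases hiS : i ∈ S
        · simp [hiS]
        · simp [hiS, hc i hiS hi]
      · -- ∀ i ∉ S, f i = h₀ i
        intro i hi
        simp [hi]
    · intro h _ hne
      rw [hM, hP]
      split_ifs with e1 e2
      · refine absurd (funext fun i => ?_) hne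
        by_cases hi : i ∈ S
        · simp only [hi, if_true]
          exact e2 i (hdis i hi)
        · simp only [hi, if_false]
          exact (e1 i hi).symm
      · exact mul_zero _
      · exact zero_mul _
      · exact zero_mul _
    · intro h
      exact absurd (Finset.mem_univ _) h
  · rw [if_neg hc]
    apply Finset.sum_eq_zero
    intro h _
    rw [hM, hP]
    push_neg at hc
    obtain ⟨i, hiS, hiS', hne⟩ := hc
    split_ifs with e1 e2
    · exact absurd ((e1 i hiS).trans (e2 i hiS')) hne
    · exact mul_zero _
    · exact zero_mul _
    · exact zero_mul _

lemma commute_of_disjoint {S S' : Set V} {M P : Op d}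
    (hM : SupportedOn d S M) (hP : SupportedOn d S' P)
    (hdis : ∀ i, i ∈ S → i ∉ S') : M * P = P * M := by
  classical
  obtain ⟨N, hN⟩ := hM
  obtain ⟨N', hN'⟩ := hP
  ext f g
  rw [mul_entry hN hN' hdis f g, mul_entry hN' hN (fun i hi hi2 => hdis i hi2 hi) f g]
  by_cases hc : ∀ i, i ∉ S → i ∉ S' → f i = g i
  · rw [if_pos hc, if_pos fun i h1 h2 => hc i h2 h1, mul_comm]
  · rw [if_neg hc, if_neg fun hc2 => hc fun i h1 h2 => hc2 i h2 h1]

lemma mul_unitAt (M : Op d) (x : V) (a b : Fin (d x)) (f g : Cfg d) :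
    (M * unitAt d x a b) f g
      = if g x = b then M f (Function.update g x a) else 0 := by
  classical
  rw [Matrix.mul_apply]
  rw [Finset.sum_eq_single (Function.update g x a)]
  · show M f _ * (if _ ∧ _ ∧ _ then (1:ℂ) else 0) = _
    by_cases hb : g x = b
    · rw [if_pos ⟨Function.update_self x a g, hb,
        fun j hj => Function.update_of_ne hj a g⟩, mul_one, if_pos hb]
    · rw [if_neg (by tauto), mul_zero, if_neg hb]
  · intro h _ hne
    show M f h * (if _ ∧ _ ∧ _ then (1:ℂ) else 0) = 0
    rw [if_neg, mul_zero]
    rintro ⟨ha, -, hrest⟩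
    refine hne (funext fun j => ?_)
    by_cases hj : j = x
    · subst hj
      rw [Function.update_self, ha]
    · rw [Function.update_of_ne hj, hrest j hj]
  · intro h
    exact absurd (Finset.mem_univ _) h

lemma unitAt_mul (M : Op d) (x : V) (a b : Fin (d x)) (f g : Cfg d) :
    (unitAt d x a b * M) f g
      = if f x = a then M (Function.update f x b) g else 0 := by
  classical
  rw [Matrix.mul_apply]
  rw [Finset.sum_eq_single (Function.update f x b)]
  · show (if _ ∧ _ ∧ _ then (1:ℂ) else 0) * M _ g = _
    by_cases ha : f x = a
    · rw [if_pos ⟨ha, Function.update_self x b f,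
        fun j hj => (Function.update_of_ne hj b f).symm⟩, one_mul, if_pos ha]
    · rw [if_neg (by tauto), zero_mul, if_neg ha]
  · intro h _ hne
    show (if _ ∧ _ ∧ _ then (1:ℂ) else 0) * M h g = 0
    rw [if_neg, zero_mul]
    rintro ⟨-, hb, hrest⟩
    refine hne (funext fun j => ?_)
    by_cases hj : j = x
    · subst hj
      rw [Function.update_self, hb]
    · rw [Function.update_of_ne hj, hrest j hj]
  · intro h
    exact absurd (Finset.mem_univ _) h

open Classical in
/-- extension of a configuration on `T` by a default configuration. -/
noncomputable def extFn (d : V → ℕ) (T : Set V) (c₀ : Cfg d)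
    (u : ∀ i : T, Fin (d i.1)) : Cfg d :=
  fun i => if h : i ∈ T then u ⟨i, h⟩ else c₀ i

lemma supportedOn_of_commute (T : Set V) (M : Op d)
    (hcomm : ∀ x ∉ T, ∀ a b : Fin (d x),
      M * unitAt d x a b = unitAt d x a b * M) :
    SupportedOn d T M := by
  classical
  by_cases hne : Nonempty (Cfg d)
  case neg => exact ⟨0, fun f g => absurd ⟨f⟩ hne⟩
  obtain ⟨c₀⟩ := hne
  have key : ∀ x ∉ T, ∀ (a b : Fin (d x)) (f g : Cfg d),
      (if g x = b then M f (Function.update g x a) else 0)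
        = (if f x = a then M (Function.update f x b) g else 0) := by
    intro x hx a b f g
    rw [← mul_unitAt, ← unitAt_mul, hcomm x hx a b]
  have hzero : ∀ x ∉ T, ∀ f g : Cfg d, f x ≠ g x → M f g = 0 := by
    intro x hx f g hfg
    have h := key x hx (g x) (g x) f g
    rw [if_pos rfl, Function.update_eq_self, if_neg hfg] at h
    exact h
  have hstep : ∀ x ∉ T, ∀ (f g : Cfg d) (c : Fin (d x)), f x = g x →
      M (Function.update f x c) (Function.update g x c) = M f g := by
    intro x hx f g c hfg
    have h := key x hx c (g x) (Function.update f x c) g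
    rw [if_pos rfl, if_pos (Function.update_self x c f), Function.update_idem,
      ← hfg, Function.update_eq_self] at h
    exact h
  have hbase : ∀ f g : Cfg d, (∀ i ∉ T, f i = c₀ i) → (∀ i ∉ T, f i = g i) →
      M f g = M (extFn d T c₀ fun i => f i.1) (extFn d T c₀ fun i => g i.1) := by
    intro f g h0 hfg
    have hf : (extFn d T c₀ fun i => f i.1) = f := funext fun i => by
      by_cases hi : i ∈ T
      · simp [extFn, hi]
      · simp [extFn, hi, (h0 i hi).symm]
    have hg : (extFn d T c₀ fun i => g i.1) = g := funext fun i => by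
      by_cases hi : i ∈ T
      · simp [extFn, hi]
      · simp [extFn, hi, ((hfg i hi).symm.trans (h0 i hi)).symm]
    rw [hf, hg]
  have main : ∀ (n : ℕ) (f g : Cfg d),
      (Finset.univ.filter fun i => i ∉ T ∧ f i ≠ c₀ i).card ≤ n →
      (∀ i ∉ T, f i = g i) →
      M f g = M (extFn d T c₀ fun i => f i.1) (extFn d T c₀ fun i => g i.1) := by
    intro n
    induction n with
    | zero =>
      intro f g hcard hfg
      refine hbase f g (fun i hi => ?_) hfg
      by_contra hne'
      have hmem : i ∈ Finset.univ.filter fun i => i ∉ T ∧ f i ≠ c₀ i := by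
        simp [hi, hne']
      rw [Finset.card_eq_zero.mp (Nat.le_zero.mp hcard)] at hmem
      exact absurd hmem (Finset.notMem_empty i)
    | succ n ih =>
      intro f g hcard hfg
      rcases Finset.eq_empty_or_nonempty
          (Finset.univ.filter fun i => i ∉ T ∧ f i ≠ c₀ i) with hemp | ⟨i, hi⟩
      · exact ih f g (by simp [hemp]) hfg
      · rw [Finset.mem_filter] at hi
        obtain ⟨-, hiT, hic⟩ := hi
        have hM' := hstep i hiT f g (c₀ i) (hfg i hiT)
        have hsub : (Finset.univ.filter fun j =>
            j ∉ T ∧ Function.update f i (c₀ i) j ≠ c₀ j)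
            ⊆ (Finset.univ.filter fun j => j ∉ T ∧ f j ≠ c₀ j).erase i := by
          intro j hj
          rw [Finset.mem_filter] at hj
          obtain ⟨-, hjT, hjc⟩ := hj
          have hji : j ≠ i := by
            rintro rfl
            exact hjc (Function.update_self j (c₀ j) f)
          rw [Function.update_of_ne hji] at hjc
          rw [Finset.mem_erase, Finset.mem_filter]
          exact ⟨hji, Finset.mem_univ j, hjT, hjc⟩
        have hcard' : (Finset.univ.filter fun j =>
            j ∉ T ∧ Function.update f i (c₀ i) j ≠ c₀ j).card ≤ n := by
          have h1 := Finset.card_le_card hsub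
          rw [Finset.card_erase_of_mem (by simp [hiT, hic])] at h1
          omega
        have hfg' : ∀ j ∉ T, Function.update f i (c₀ i) j
            = Function.update g i (c₀ i) j := by
          intro j hj
          by_cases hji : j = i
          · subst hji
            rw [Function.update_self, Function.update_self]
          · rw [Function.update_of_ne hji, Function.update_of_ne hji]
            exact hfg j hj
        have hih := ih _ _ hcard' hfg'
        have hrr : ∀ h : Cfg d, (fun j : T => Function.update h i (c₀ i) j.1)
            = fun j : T => h j.1 := fun h => funext fun j =>
          Function.update_of_ne (fun he : j.1 = i => hiT (he ▸ j.2)) _ _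
        have hre_f := congrArg (extFn d T c₀) (hrr f)
        have hre_g := congrArg (extFn d T c₀) (hrr g)
        rw [← hM', hih, hre_f, hre_g]
  refine ⟨Matrix.of fun u v => M (extFn d T c₀ u) (extFn d T c₀ v), fun f g => ?_⟩
  by_cases hc : ∀ i ∉ T, f i = g i
  · rw [if_pos hc]
    exact main _ f g le_rfl hc
  · rw [if_neg hc]
    push_neg at hc
    obtain ⟨i, hiT, hne'⟩ := hc
    exact hzero i hiT f g hne'

lemma supportedOn_supp (d : V → ℕ) (M : Op d) : SupportedOn d (Supp d M) M := by
  apply supportedOn_of_commute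
  intro x hx a b
  have hx' : ¬ ∀ S : Set V, SupportedOn d S M → x ∈ S := hx
  push_neg at hx'
  obtain ⟨S, hS, hxS⟩ := hx'
  exact commute_of_disjoint hS (unitAt_supportedOn d x a b)
    (fun i hi hi' => hxS ((Set.mem_singleton_iff.mp hi') ▸ hi))

end Aux

/-- The image under a QCA of range `R` of an `l`-visibly simple algebra is
`(l + 2R)`-visibly simple. -/
theorem visiblySimple_image_qca {V : Type} [Fintype V] [DecidableEq V]
    [PseudoMetricSpace V] (d : V → ℕ) (R l : ℝ) (α : Op d ≃ₐ[ℂ] Op d)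
    (hα : IsQCA d R α) (A : Subalgebra ℂ (Op d))
    (hA : VisiblySimple d l A) :
    VisiblySimple d (l + 2 * R) (Subalgebra.map α.toAlgHom A) := by
  rintro O' hO' x hx
  rw [Subalgebra.mem_map] at hO'
  obtain ⟨O, hO, rfl⟩ := hO'
  have hsupp : SupportedOn d {z | ∃ y ∈ Supp d O, dist z y ≤ R} (α O) := by
    apply supportedOn_of_commute
    intro z hz a b
    have hQ := (hα.2 z (unitAt d z a b) (unitAt_supportedOn d z a b)).2
    have hdis : ∀ i, i ∈ Supp d O → i ∉ Metric.closedBall z R := by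
      intro i hi hball
      exact hz ⟨i, hi, by rw [dist_comm]; exact Metric.mem_closedBall.mp hball⟩
    have hcomm := commute_of_disjoint (supportedOn_supp d O) hQ hdis
    have h2 := congrArg α hcomm
    simpa only [_root_.map_mul, AlgEquiv.apply_symm_apply] using h2
  have hxU : x ∈ {z | ∃ y ∈ Supp d O, dist z y ≤ R} := hx _ hsupp
  obtain ⟨y, hy, hdxy⟩ := hxU
  obtain ⟨P, hPA, hPsupp, hPnc⟩ := hA O hO y hy
  refine ⟨α P, Subalgebra.mem_map.mpr ⟨P, hPA, rfl⟩, ?_, ?_⟩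
  · apply supportedOn_of_commute
    intro z hz a b
    have hQ := (hα.2 z (unitAt d z a b) (unitAt_supportedOn d z a b)).2
    have hdis : ∀ i, i ∈ Metric.closedBall y l → i ∉ Metric.closedBall z R := by
      intro i hi hball
      rw [Metric.mem_closedBall] at hi hball
      refine hz (Metric.mem_closedBall.mpr ?_)
      calc dist z x ≤ dist z i + dist i y + dist y x := dist_triangle4 z i y x
        _ ≤ R + l + R := by
            have h1 : dist z i ≤ R := by rw [dist_comm]; exact hball
            have h2 : dist y x ≤ R := by rw [dist_comm]; exact hdxy
            gcongr
        _ = l + 2 * R := by ring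
    have hcomm := commute_of_disjoint hPsupp hQ hdis
    have h2 := congrArg α hcomm
    simpa only [_root_.map_mul, AlgEquiv.apply_symm_apply] using h2
  · intro hcon
    apply hPnc
    have h2 : α (O * P) = α (P * O) := by
      rw [_root_.map_mul, _root_.map_mul]
      exact hcon
    exact α.injective h2
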